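/- arXiv:1909.02644 — 2 statements merged into one kernel-verified Lean document; each statement's English description precedes it below -/
import Mathlib

section
/- Let $\Psi:\mathbb{R}\to(0,1)$ be a cumulative distribution function, and let $y$ be a real random variable with missingness indicator $r\in\{0,1\}$ satisfying $\Pr(r=1\mid y)=\Psi\{\alpha(y-\delta)\}$ for fixed $\alpha>0$, $\delta\in\mathbb{R}$. Suppose $A$ is a random vector in $\mathbb{R}^s$ with $r$ conditionally independent of $A$ given $y$, and suppose $\mathbb{E}\big[\|(1,A^T)^T\| / \Psi\{\alpha(y-\delta)\}\big]<\infty$. Then $\mathbb{E}\big[(1,A^T)^T\big(1 - r\,[\Psi\{\alpha(y-\delta)\}]^{-1}\big)\big]=0$. -/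
open MeasureTheory ProbabilityTheory

/-- the IV-GMM moment condition. If `Pr(r = 1 ∣ y) = Ψ(α (y - δ))`,
`r` is conditionally independent of the instrument `A` given `y`, and the weighted
instrument vector is integrable, then the moment function
`h = (1, Aᵀ)ᵀ (1 - r / Ψ(α(y - δ)))` has mean zero. -/
theorem stmt0 {Ω : Type*} [MeasurableSpace Ω] [StandardBorelSpace Ω]
    (μ : Measure Ω) [IsProbabilityMeasure μ]
    {s : ℕ} (y r : Ω → ℝ) (A : Ω → (Fin s → ℝ))
    (Ψ : ℝ → ℝ) (α δ : ℝ) (hα : 0 < α)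
    (hΨ_pos : ∀ x, 0 < Ψ x) (hΨ_lt_one : ∀ x, Ψ x < 1) (hΨ_mono : Monotone Ψ)
    (hy : Measurable y) (hr : Measurable r) (hA : Measurable A)
    (hr01 : ∀ ω, r ω = 0 ∨ r ω = 1)
    -- the missingness mechanism: E[r ∣ σ(y)] = Ψ(α (y - δ))
    (hmech : μ[r | MeasurableSpace.comap y inferInstance]
      =ᵐ[μ] fun ω => Ψ (α * (y ω - δ)))
    -- r is conditionally independent of A given y
    (hci : CondIndepFun (MeasurableSpace.comap y inferInstance) (hy.comap_le) r A μ)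
    -- integrability: E[‖(1, Aᵀ)ᵀ‖ / Ψ(α(y-δ))] < ∞
    (hint : Integrable
      (fun ω => ‖(Fin.cons (1 : ℝ) (A ω) : Fin (s + 1) → ℝ)‖ / Ψ (α * (y ω - δ))) μ) :
    ∀ i : Fin (s + 1),
      ∫ ω, (Fin.cons (1 : ℝ) (A ω) : Fin (s + 1) → ℝ) i * (1 - r ω / Ψ (α * (y ω - δ))) ∂μ = 0 := by
  intro i
  have hΨm : Measurable Ψ := hΨ_mono.measurable
  set w : Ω → ℝ := fun ω => Ψ (α * (y ω - δ)) with hwdef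
  have hw_meas : Measurable w := hΨm.comp ((measurable_const.mul (hy.sub measurable_const)))
  have hw_pos : ∀ ω, 0 < w ω := fun ω => hΨ_pos _
  have hw_le : ∀ ω, w ω ≤ 1 := fun ω => (hΨ_lt_one _).le
  have hy_m1 : Measurable[(MeasurableSpace.comap y inferInstance)] y := measurable_iff_comap_le.mpr le_rfl
  have hA_m2 : Measurable[(MeasurableSpace.comap A inferInstance)] A := measurable_iff_comap_le.mpr le_rfl
  have hw_m1 : Measurable[(MeasurableSpace.comap y inferInstance)] w :=
    hΨm.comp ((measurable_const.mul (hy_m1.sub measurable_const)))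
  -- the coordinate function g
  set g : Ω → ℝ := fun ω => (Fin.cons (1 : ℝ) (A ω) : Fin (s + 1) → ℝ) i with hgdef
  have hcons : Measurable (fun v : Fin s → ℝ => (Fin.cons (1 : ℝ) v : Fin (s + 1) → ℝ) i) := by
    refine Fin.cases ?_ (fun j => ?_) i
    · simpa using measurable_const
    · simpa using measurable_pi_apply j
  have hg_meas : Measurable g := hcons.comp hA
  have hg_m2 : Measurable[(MeasurableSpace.comap A inferInstance)] g := hcons.comp hA_m2
  have hg_le : ∀ ω, |g ω| ≤ ‖(Fin.cons (1 : ℝ) (A ω) : Fin (s + 1) → ℝ)‖ := by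
    intro ω; simpa [g, Real.norm_eq_abs] using
      norm_le_pi_norm (Fin.cons (1 : ℝ) (A ω) : Fin (s + 1) → ℝ) i
  -- F := g / w
  set F : Ω → ℝ := fun ω => g ω / w ω with hFdef
  have hF_meas : Measurable F := hg_meas.div hw_meas
  have hF_bound : ∀ ω, |F ω| ≤ ‖(Fin.cons (1 : ℝ) (A ω) : Fin (s + 1) → ℝ)‖ / w ω := by
    intro ω
    rw [abs_div, abs_of_pos (hw_pos ω)]
    gcongr
    · exact (hw_pos ω).le
    · exact hg_le ω
  have hF_int : Integrable F μ := by
    refine hint.mono' hF_meas.aestronglyMeasurable ?_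
    exact Filter.Eventually.of_forall fun ω => by
      simpa [Real.norm_eq_abs] using hF_bound ω
  have hg_int : Integrable g μ := by
    refine hF_int.abs.mono' hg_meas.aestronglyMeasurable ?_
    refine Filter.Eventually.of_forall fun ω => ?_
    have h1 : |g ω| ≤ |g ω| / w ω := by
      rw [le_div_iff₀ (hw_pos ω)]
      nlinarith [abs_nonneg (g ω), hw_le ω, hw_pos ω]
    calc ‖g ω‖ = |g ω| := rfl
      _ ≤ |g ω| / w ω := h1
      _ = |F ω| := by rw [hFdef]; simp [abs_div, abs_of_pos (hw_pos ω)]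
  -- the σ-algebra m' = σ(y) ⊔ σ(A)
  have hm'le : (MeasurableSpace.comap y inferInstance ⊔ MeasurableSpace.comap A inferInstance) ≤ ‹MeasurableSpace Ω› := sup_le hy.comap_le hA.comap_le
  -- S = {r = 1}
  set S : Set Ω := r ⁻¹' {1} with hSdef
  have hS : MeasurableSet S := hr (measurableSet_singleton 1)
  have hrind : (S.indicator fun _ => (1 : ℝ)) = r := by
    funext ω
    rcases hr01 ω with h | h <;> simp [S, Set.indicator_apply, h]
  -- integrability facts for bounded functions
  have hbdd_int : ∀ (f : Ω → ℝ), Measurable f → (∀ ω, |f ω| ≤ 1) → Integrable f μ := by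
    intro f hf hb
    exact (integrable_const (1 : ℝ)).mono' hf.aestronglyMeasurable
      (Filter.Eventually.of_forall fun ω => by simpa [Real.norm_eq_abs] using hb ω)
  have hw_int : Integrable w μ := hbdd_int w hw_meas fun ω =>
    abs_le.mpr ⟨by linarith [hw_pos ω], hw_le ω⟩
  -- conditional expectation of the indicator of S is w
  have hcondS : μ[S.indicator fun _ => (1 : ℝ) | (MeasurableSpace.comap y inferInstance)] =ᵐ[μ] w := by
    rw [hrind]; exact hmech
  -- the two measures
  set ν₂ : Measure Ω := μ.withDensity (fun ω => ENNReal.ofReal (w ω)) with hν₂def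
  have hfin₂ : IsFiniteMeasure ν₂ := by
    constructor
    rw [hν₂def, withDensity_apply _ MeasurableSet.univ]
    calc ∫⁻ ω in Set.univ, ENNReal.ofReal (w ω) ∂μ
        ≤ ∫⁻ _ in Set.univ, 1 ∂μ := by
          refine lintegral_mono fun ω => ?_
          exact ENNReal.ofReal_le_one.mpr (hw_le ω)
      _ < ⊤ := by simp
  -- key: the two measures agree on intersections t1 ∩ t2
  have hkey : ∀ t1 t2 : Set Ω, MeasurableSet[(MeasurableSpace.comap y inferInstance)] t1 → MeasurableSet[(MeasurableSpace.comap A inferInstance)] t2 →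
      (μ.restrict S) (t1 ∩ t2) = ν₂ (t1 ∩ t2) := by
    intro t1 t2 ht1 ht2
    have ht1' : MeasurableSet t1 := hy.comap_le _ ht1
    have ht2' : MeasurableSet t2 := hA.comap_le _ ht2
    have hX : MeasurableSet (t1 ∩ t2) := ht1'.inter ht2'
    -- conditional independence
    have hS' : MeasurableSet[MeasurableSpace.comap r inferInstance] S :=
      ⟨{1}, measurableSet_singleton 1, rfl⟩
    have hci' := (condIndepFun_iff (MeasurableSpace.comap y inferInstance) hy.comap_le r A hr hA μ).mp hci S t2 hS' ht2
    -- indicator integrability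
    have hind2 : Integrable (t2.indicator fun _ => (1 : ℝ)) μ :=
      hbdd_int _ (measurable_const.indicator ht2') fun ω => by
        by_cases hω : ω ∈ t2 <;> simp [Set.indicator_apply, hω]
    have hindS2 : Integrable ((S ∩ t2).indicator fun _ => (1 : ℝ)) μ :=
      hbdd_int _ (measurable_const.indicator (hS.inter ht2')) fun ω => by
        by_cases hω : ω ∈ S ∩ t2 <;> simp [Set.indicator_apply, hω]
    have hwind : Integrable (w * t2.indicator fun _ => (1 : ℝ)) μ :=
      hbdd_int _ (hw_meas.mul (measurable_const.indicator ht2')) fun ω => by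
        by_cases hω : ω ∈ t2 <;>
          simp [Set.indicator_apply, hω, abs_le.mpr ⟨by linarith [hw_pos ω], hw_le ω⟩]
    -- pull-out property
    have hpull : μ[w * t2.indicator fun _ => (1 : ℝ) | (MeasurableSpace.comap y inferInstance)]
        =ᵐ[μ] w * μ[t2.indicator fun _ => (1 : ℝ) | (MeasurableSpace.comap y inferInstance)] :=
      condExp_mul_of_stronglyMeasurable_left hw_m1.stronglyMeasurable hwind hind2
    -- chain of a.e. equalities
    have hchain : μ[(S ∩ t2).indicator fun _ => (1 : ℝ) | (MeasurableSpace.comap y inferInstance)]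
        =ᵐ[μ] μ[w * t2.indicator fun _ => (1 : ℝ) | (MeasurableSpace.comap y inferInstance)] := by
      refine hci'.trans ?_
      refine (Filter.EventuallyEq.mul hcondS
        (Filter.EventuallyEq.refl _ (μ[t2.indicator fun _ => (1 : ℝ) | (MeasurableSpace.comap y inferInstance)]))).trans ?_
      exact hpull.symm
    -- integrate over t1
    have hreal : (μ ((S ∩ t2) ∩ t1)).toReal = ∫ ω in t1 ∩ t2, w ω ∂μ := by
      have e1 : ∫ ω in t1, ((S ∩ t2).indicator fun _ => (1 : ℝ)) ω ∂μ
          = (μ ((S ∩ t2) ∩ t1)).toReal := by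
        rw [integral_indicator_const (1 : ℝ) (hS.inter ht2'), measureReal_restrict_apply (hS.inter ht2')]
        simp [measureReal_def]
      have e2 : ∫ ω in t1, (μ[(S ∩ t2).indicator fun _ => (1 : ℝ) | (MeasurableSpace.comap y inferInstance)]) ω ∂μ
          = ∫ ω in t1, ((S ∩ t2).indicator fun _ => (1 : ℝ)) ω ∂μ :=
        setIntegral_condExp hy.comap_le hindS2 ht1
      have e3 : ∫ ω in t1, (μ[(S ∩ t2).indicator fun _ => (1 : ℝ) | (MeasurableSpace.comap y inferInstance)]) ω ∂μ
          = ∫ ω in t1, (μ[w * t2.indicator fun _ => (1 : ℝ) | (MeasurableSpace.comap y inferInstance)]) ω ∂μ := by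
        refine setIntegral_congr_ae ht1' ?_
        exact hchain.mono fun ω hω _ => hω
      have e4 : ∫ ω in t1, (μ[w * t2.indicator fun _ => (1 : ℝ) | (MeasurableSpace.comap y inferInstance)]) ω ∂μ
          = ∫ ω in t1, (w * t2.indicator fun _ => (1 : ℝ)) ω ∂μ :=
        setIntegral_condExp hy.comap_le hwind ht1
      have e5 : ∫ ω in t1, (w * t2.indicator fun _ => (1 : ℝ)) ω ∂μ
          = ∫ ω in t1 ∩ t2, w ω ∂μ := by
        have : (fun ω => (w * t2.indicator fun _ => (1 : ℝ)) ω) = t2.indicator w := by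
          funext ω
          by_cases hω : ω ∈ t2 <;> simp [Set.indicator_apply, hω]
        rw [this, setIntegral_indicator ht2']
      rw [← e1, ← e2, e3, e4, e5]
    -- convert to ENNReal
    have hL : (μ.restrict S) (t1 ∩ t2) = μ ((S ∩ t2) ∩ t1) := by
      rw [Measure.restrict_apply hX]
      congr 1
      ext ω; simp [Set.mem_inter_iff]; tauto
    have hR : ν₂ (t1 ∩ t2) = ENNReal.ofReal (∫ ω in t1 ∩ t2, w ω ∂μ) := by
      rw [hν₂def, withDensity_apply _ hX]
      rw [← ofReal_integral_eq_lintegral_ofReal (hw_int.restrict)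
        (Filter.Eventually.of_forall fun ω => (hw_pos ω).le)]
    rw [hL, hR, ← ENNReal.ofReal_toReal (measure_ne_top μ ((S ∩ t2) ∩ t1)), hreal]
  -- generate m' from the π-system of intersections
  set C : Set (Set Ω) := {u | ∃ t1, MeasurableSet[(MeasurableSpace.comap y inferInstance)] t1 ∧ ∃ t2, MeasurableSet[(MeasurableSpace.comap A inferInstance)] t2 ∧ u = t1 ∩ t2}
    with hCdef
  have hgen : (MeasurableSpace.comap y inferInstance ⊔ MeasurableSpace.comap A inferInstance) = MeasurableSpace.generateFrom C := by
    refine le_antisymm ?_ ?_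
    · refine sup_le ?_ ?_
      · intro u hu
        refine MeasurableSpace.measurableSet_generateFrom ?_
        exact ⟨u, hu, Set.univ, MeasurableSet.univ, (Set.inter_univ u).symm⟩
      · intro u hu
        refine MeasurableSpace.measurableSet_generateFrom ?_
        exact ⟨Set.univ, MeasurableSet.univ, u, hu, (Set.univ_inter u).symm⟩
    · refine MeasurableSpace.generateFrom_le ?_
      rintro u ⟨t1, ht1, t2, ht2, rfl⟩
      exact (le_sup_left (b := (MeasurableSpace.comap A inferInstance)) _ ht1).inter (le_sup_right (a := (MeasurableSpace.comap y inferInstance)) _ ht2)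
  have hpi : IsPiSystem C := by
    rintro u ⟨t1, ht1, t2, ht2, rfl⟩ v ⟨t1', ht1', t2', ht2', rfl⟩ -
    refine ⟨t1 ∩ t1', ht1.inter ht1', t2 ∩ t2', ht2.inter ht2', ?_⟩
    ext ω; simp [Set.mem_inter_iff]; tauto
  -- the trimmed measures agree
  haveI : IsFiniteMeasure ((μ.restrict S).trim hm'le) := isFiniteMeasure_trim hm'le
  haveI : IsFiniteMeasure ν₂ := hfin₂
  have htrim : (μ.restrict S).trim hm'le = ν₂.trim hm'le := by
    refine ext_of_generate_finite C hgen hpi ?_ ?_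
    · rintro u ⟨t1, ht1, t2, ht2, rfl⟩
      have hu : MeasurableSet[(MeasurableSpace.comap y inferInstance ⊔ MeasurableSpace.comap A inferInstance)] (t1 ∩ t2) :=
        (le_sup_left (b := (MeasurableSpace.comap A inferInstance)) _ ht1).inter (le_sup_right (a := (MeasurableSpace.comap y inferInstance)) _ ht2)
      rw [trim_measurableSet_eq hm'le hu, trim_measurableSet_eq hm'le hu]
      exact hkey t1 t2 ht1 ht2
    · rw [trim_measurableSet_eq hm'le MeasurableSet.univ,
        trim_measurableSet_eq hm'le MeasurableSet.univ]
      have := hkey Set.univ Set.univ MeasurableSet.univ MeasurableSet.univ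
      simpa using this
  -- F is m'-strongly measurable
  have hF_m' : StronglyMeasurable[(MeasurableSpace.comap y inferInstance ⊔ MeasurableSpace.comap A inferInstance)] F := by
    have h1 : Measurable[(MeasurableSpace.comap y inferInstance ⊔ MeasurableSpace.comap A inferInstance)] g := hg_m2.mono le_sup_right le_rfl
    have h2 : Measurable[(MeasurableSpace.comap y inferInstance ⊔ MeasurableSpace.comap A inferInstance)] w := hw_m1.mono le_sup_left le_rfl
    exact (h1.div h2).stronglyMeasurable
  -- main computation: ∫_S F dμ = ∫ g dμ
  have hmain : ∫ ω in S, F ω ∂μ = ∫ ω, g ω ∂μ := by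
    have e1 : ∫ ω in S, F ω ∂μ = ∫ ω, F ω ∂((μ.restrict S).trim hm'le) :=
      integral_trim hm'le hF_m'
    have e2 : ∫ ω, F ω ∂(ν₂.trim hm'le) = ∫ ω, F ω ∂ν₂ :=
      (integral_trim hm'le hF_m').symm
    have e3 : ∫ ω, F ω ∂ν₂ = ∫ ω, g ω ∂μ := by
      have hd : (fun ω => ENNReal.ofReal (w ω)) = fun ω => ((w ω).toNNReal : ENNReal) := rfl
      rw [hν₂def, hd, integral_withDensity_eq_integral_smul
        (Measurable.real_toNNReal hw_meas) F]
      congr 1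
      funext ω
      have : ((w ω).toNNReal : ℝ) = w ω := Real.coe_toNNReal _ (hw_pos ω).le
      rw [NNReal.smul_def, smul_eq_mul, this, hFdef]
      field_simp
      rw [mul_comm, mul_div_assoc, div_self (hw_pos ω).ne', mul_one]
    rw [e1, htrim, e2, e3]
  -- final assembly
  have hsplit : (fun ω => g ω * (1 - r ω / w ω)) = fun ω => g ω - S.indicator F ω := by
    funext ω
    rcases hr01 ω with h | h
    · have : ω ∉ S := by simp [S, h]
      simp [h, Set.indicator_of_notMem this]
    · have : ω ∈ S := by simp [S, h]
      rw [Set.indicator_of_mem this]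
      have hwne : w ω ≠ 0 := (hw_pos ω).ne'
      simp only [F, h]
      ring
  calc ∫ ω, g ω * (1 - r ω / w ω) ∂μ
      = ∫ ω, (g ω - S.indicator F ω) ∂μ := by rw [hsplit]
    _ = ∫ ω, g ω ∂μ - ∫ ω, S.indicator F ω ∂μ :=
        integral_sub hg_int (hF_int.indicator hS)
    _ = ∫ ω, g ω ∂μ - ∫ ω in S, F ω ∂μ := by rw [integral_indicator hS]
    _ = 0 := by rw [hmain]; ring
end

section
/- Fix $\nu>0$ and let $\Psi = F_\nu$ be the CDF of the t-distribution with $\nu$ degrees of freedom, $\alpha>0$, $\delta\in\mathbb{R}$. There exist constants $a,k>0$ with $k=\nu$ such that $a|x|^\nu F_\nu(x)\to 1$ as $x\to-\infty$. Consequently, if $y$ is a real random variable with $\mathbb{E}|y|^{\nu m}<\infty$ for some integer $m\geq 1$, then $\mathbb{E}\big([F_\nu\{\alpha(y-\delta)\}]^{-m}\big)<\infty$. -/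
open MeasureTheory Real Filter
open Set

lemma aux_int (ν : ℝ) (hν : 0 < ν) {x : ℝ} (hx : x < 0) :
    IntegrableOn (fun t => |t| ^ (-(ν+1))) (Set.Iio x) := by
  have he : -(ν+1) < -1 := by linarith
  have h0 : IntegrableOn (fun t : ℝ => t ^ (-(ν+1))) (Set.Ioi (-x)) :=
    integrableOn_Ioi_rpow_of_lt he (by linarith)
  have hmap : (volume : Measure ℝ) = (volume : Measure ℝ).map Neg.neg :=
    (Measure.map_neg_eq_self volume).symm
  rw [IntegrableOn, hmap, ← IntegrableOn, measurableEmbedding_neg.integrableOn_map_iff]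
  have hpre : Neg.neg ⁻¹' Set.Iio x = Set.Ioi (-x) := by
    ext t; simp only [Set.mem_preimage, Set.mem_Iio, Set.mem_Ioi]; constructor <;> intro h <;> linarith
  rw [hpre]
  refine h0.congr_fun (fun t ht => ?_) measurableSet_Ioi
  have : (0:ℝ) < t := lt_trans (by linarith) ht
  simp [Function.comp, abs_of_pos this]

lemma aux_val (ν : ℝ) (hν : 0 < ν) {x : ℝ} (hx : x < 0) :
    ∫ t in Set.Iio x, |t| ^ (-(ν+1)) = |x| ^ (-ν) / ν := by
  have he : -(ν+1) < -1 := by linarith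
  rw [← integral_Iic_eq_integral_Iio]
  have h1 : ∫ t in Set.Iic x, |t| ^ (-(ν+1)) = ∫ t in Set.Iic x, (-t) ^ (-(ν+1)) := by
    refine setIntegral_congr_fun measurableSet_Iic (fun t ht => ?_)
    rw [abs_of_neg (lt_of_le_of_lt ht hx)]
  rw [h1, integral_comp_neg_Iic x (fun s => s ^ (-(ν+1))),
    integral_Ioi_rpow_of_lt he (by linarith)]
  rw [abs_of_neg hx]
  rw [show -(ν+1)+1 = -ν by ring]
  field_simp

lemma aux_base (ν : ℝ) (hν : 0 < ν) (t : ℝ) (ht : t ≠ 0) :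
    (t ^ 2 / ν) ^ (-((ν+1)/2)) = ν ^ ((ν+1)/2) * |t| ^ (-(ν+1)) := by
  have h2 : (t ^ 2 : ℝ) ^ (-((ν+1)/2)) = |t| ^ (-(ν+1)) := by
    rw [← sq_abs, ← Real.rpow_natCast |t| 2, ← Real.rpow_mul (abs_nonneg t)]
    norm_num
    ring_nf
  rw [Real.div_rpow (sq_nonneg t) hν.le, h2, Real.rpow_neg hν.le]
  field_simp

lemma aux_g_cont (ν cν : ℝ) (hν : 0 < ν) :
    Continuous (fun t : ℝ => cν * (1 + t ^ 2 / ν) ^ (-((ν+1)/2))) := by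
  refine continuous_const.mul ?_
  refine Continuous.rpow_const (by continuity) (fun t => Or.inl ?_)
  have : (0:ℝ) < 1 + t ^ 2 / ν := by positivity
  exact this.ne'

lemma aux_g_ub (ν cν : ℝ) (hν : 0 < ν) (hcν : 0 < cν) {t : ℝ} (ht : t ≠ 0) :
    cν * (1 + t ^ 2 / ν) ^ (-((ν+1)/2)) ≤ cν * ν ^ ((ν+1)/2) * |t| ^ (-(ν+1)) := by
  have h1 : (0:ℝ) < t ^ 2 / ν := by positivity
  have h2 : (1 + t ^ 2 / ν) ^ (-((ν+1)/2)) ≤ (t ^ 2 / ν) ^ (-((ν+1)/2)) :=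
    Real.rpow_le_rpow_of_nonpos h1 (by linarith) (by linarith)
  calc cν * (1 + t ^ 2 / ν) ^ (-((ν+1)/2)) ≤ cν * (t ^ 2 / ν) ^ (-((ν+1)/2)) := by
        exact mul_le_mul_of_nonneg_left h2 hcν.le
    _ = cν * ν ^ ((ν+1)/2) * |t| ^ (-(ν+1)) := by rw [aux_base ν hν t ht]; ring

lemma aux_g_int (ν cν : ℝ) (hν : 0 < ν) (hcν : 0 < cν) (x : ℝ) :
    IntegrableOn (fun t : ℝ => cν * (1 + t ^ 2 / ν) ^ (-((ν+1)/2))) (Set.Iio x) := by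
  have hcont := aux_g_cont ν cν hν
  have hneg : ∀ z : ℝ, z < 0 →
      IntegrableOn (fun t : ℝ => cν * (1 + t ^ 2 / ν) ^ (-((ν+1)/2))) (Set.Iio z) := by
    intro z hz
    refine Integrable.mono' (((aux_int ν hν hz).const_mul (cν * ν ^ ((ν+1)/2))))
      hcont.aestronglyMeasurable.restrict ?_
    filter_upwards [ae_restrict_mem measurableSet_Iio] with t ht
    have ht0 : t ≠ 0 := by intro h; rw [h] at ht; exact absurd ht (by simpa using hz.not_gt)
    have hpos : (0:ℝ) < 1 + t ^ 2 / ν := by positivity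
    rw [Real.norm_eq_abs, abs_of_nonneg (by positivity)]
    exact aux_g_ub ν cν hν hcν ht0
  rcases lt_or_ge x 0 with hx | hx
  · exact hneg x hx
  · have : Set.Iio x ⊆ Set.Iio (-1) ∪ Set.Icc (-1) x := by
      intro t ht
      rcases lt_or_ge t (-1) with h | h
      · exact Or.inl h
      · exact Or.inr ⟨h, le_of_lt ht⟩
    refine IntegrableOn.mono_set ?_ this
    exact (hneg (-1) (by norm_num)).union (hcont.integrableOn_Icc)

lemma aux_F_ub (ν cν : ℝ) (hν : 0 < ν) (hcν : 0 < cν) {x : ℝ} (hx : x < 0) :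
    (∫ t in Set.Iio x, cν * (1 + t ^ 2 / ν) ^ (-((ν+1)/2)))
      ≤ cν * ν ^ ((ν+1)/2) * (|x| ^ (-ν) / ν) := by
  have h1 : (∫ t in Set.Iio x, cν * (1 + t ^ 2 / ν) ^ (-((ν+1)/2)))
      ≤ ∫ t in Set.Iio x, cν * ν ^ ((ν+1)/2) * |t| ^ (-(ν+1)) := by
    refine setIntegral_mono_on (aux_g_int ν cν hν hcν x)
      ((aux_int ν hν hx).const_mul _) measurableSet_Iio (fun t ht => ?_)
    exact aux_g_ub ν cν hν hcν (by intro h; rw [h] at ht; exact absurd ht (by simpa using hx.not_gt))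
  have h2 : (∫ t in Set.Iio x, cν * ν ^ ((ν+1)/2) * |t| ^ (-(ν+1)))
      = cν * ν ^ ((ν+1)/2) * (|x| ^ (-ν) / ν) := by
    simp only [mul_assoc]
    rw [MeasureTheory.integral_const_mul cν, MeasureTheory.integral_const_mul, aux_val ν hν hx]
  linarith

lemma aux_F_lb (ν cν : ℝ) (hν : 0 < ν) (hcν : 0 < cν) {x : ℝ} (hx : x < 0) :
    (1 + ν / x ^ 2) ^ (-((ν+1)/2)) * (cν * ν ^ ((ν+1)/2) * (|x| ^ (-ν) / ν))
      ≤ ∫ t in Set.Iio x, cν * (1 + t ^ 2 / ν) ^ (-((ν+1)/2)) := by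
  have hx2 : (0:ℝ) < x ^ 2 := by nlinarith
  have hq0 : (0:ℝ) ≤ ν / x ^ 2 := by positivity
  have hq : (0:ℝ) < 1 + ν / x ^ 2 := by linarith
  set K : ℝ := (1 + ν / x ^ 2) ^ (-((ν+1)/2)) * (cν * ν ^ ((ν+1)/2)) with hK
  have h1 : (∫ t in Set.Iio x, K * |t| ^ (-(ν+1)))
      ≤ ∫ t in Set.Iio x, cν * (1 + t ^ 2 / ν) ^ (-((ν+1)/2)) := by
    refine setIntegral_mono_on ((aux_int ν hν hx).const_mul K)
      (aux_g_int ν cν hν hcν x) measurableSet_Iio (fun t ht => ?_)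
    have htx : t < x := ht
    have ht0 : t < 0 := htx.trans hx
    have ht2 : (0:ℝ) < t ^ 2 := by nlinarith
    have hmono : ν / t ^ 2 ≤ ν / x ^ 2 := by
      apply div_le_div_of_nonneg_left hν.le hx2
      have habs : |x| ≤ |t| := by
        rw [abs_of_neg hx, abs_of_neg ht0]; linarith
      calc x ^ 2 = |x| ^ 2 := (sq_abs x).symm
        _ ≤ |t| ^ 2 := pow_le_pow_left₀ (abs_nonneg x) habs 2
        _ = t ^ 2 := sq_abs t
    have heq : 1 + t ^ 2 / ν = (t ^ 2 / ν) * (1 + ν / t ^ 2) := by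
      rw [mul_add, mul_one, div_mul_div_comm, mul_comm (t^2) ν, div_self (mul_pos hν ht2).ne', add_comm]
    have hle : 1 + t ^ 2 / ν ≤ (t ^ 2 / ν) * (1 + ν / x ^ 2) := by
      rw [heq]
      exact mul_le_mul_of_nonneg_left (by linarith) (div_pos ht2 hν).le
    have h2 : ((t ^ 2 / ν) * (1 + ν / x ^ 2)) ^ (-((ν+1)/2)) ≤ (1 + t ^ 2 / ν) ^ (-((ν+1)/2)) :=
      Real.rpow_le_rpow_of_nonpos (by positivity) hle (by linarith)
    have h3 : ((t ^ 2 / ν) * (1 + ν / x ^ 2)) ^ (-((ν+1)/2))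
        = (1 + ν / x ^ 2) ^ (-((ν+1)/2)) * (ν ^ ((ν+1)/2) * |t| ^ (-(ν+1))) := by
      rw [Real.mul_rpow (div_pos ht2 hν).le hq.le, aux_base ν hν t ht0.ne, mul_comm]
    calc K * |t| ^ (-(ν+1))
        = cν * (((t ^ 2 / ν) * (1 + ν / x ^ 2)) ^ (-((ν+1)/2))) := by rw [h3, hK]; ring
      _ ≤ cν * (1 + t ^ 2 / ν) ^ (-((ν+1)/2)) := mul_le_mul_of_nonneg_left h2 hcν.le
  have h1' : (∫ t in Set.Iio x, K * |t| ^ (-(ν+1))) = K * (|x| ^ (-ν) / ν) := by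
    rw [MeasureTheory.integral_const_mul, aux_val ν hν hx]
  rw [h1'] at h1
  calc (1 + ν / x ^ 2) ^ (-((ν+1)/2)) * (cν * ν ^ ((ν+1)/2) * (|x| ^ (-ν) / ν))
      = K * (|x| ^ (-ν) / ν) := by rw [hK]; ring
    _ ≤ _ := h1

/-- Remark S.3(ii): the left tail of the t-distribution CDF `F_ν`
decays polynomially of order `ν` (there is `a > 0` with `a |x|^ν F_ν(x) → 1` as
`x → -∞`), and consequently inverse probability weights under `Ψ = F_ν` have finite
`m`-th moments whenever `E|y|^{νm} < ∞`. -/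
theorem stmt9 (ν : ℝ) (hν : 0 < ν) (cν : ℝ) (hcν : 0 < cν)
    (F : ℝ → ℝ)
    -- F is the CDF of the t distribution with ν degrees of freedom
    (hF : ∀ x, F x = ∫ t in Set.Iio x, cν * (1 + t ^ 2 / ν) ^ (-((ν + 1) / 2)))
    (hF_cdf : Tendsto F atTop (nhds 1))
    (α δ : ℝ) (hα : 0 < α)
    {Ω : Type*} [MeasurableSpace Ω] (μ : Measure Ω) [IsProbabilityMeasure μ]
    (y : Ω → ℝ) (hy : Measurable y) (m : ℕ) (hm : 1 ≤ m)
    (hmom : Integrable (fun ω => |y ω| ^ (ν * m)) μ) :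
    (∃ a > 0, Tendsto (fun x => a * |x| ^ ν * F x) atBot (nhds 1)) ∧
      Integrable (fun ω => (F (α * (y ω - δ)))⁻¹ ^ m) μ := by
  have hgpos : ∀ t : ℝ, 0 < cν * (1 + t ^ 2 / ν) ^ (-((ν + 1) / 2)) := by
    intro t
    have h : (0:ℝ) < 1 + t ^ 2 / ν := by positivity
    positivity
  have hnp : (0:ℝ) < ν ^ ((ν + 1) / 2) := Real.rpow_pos_of_pos hν _
  have hFmono : Monotone F := by
    intro u v huv
    rw [hF u, hF v]
    exact setIntegral_mono_set (aux_g_int ν cν hν hcν v)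
      (Eventually.of_forall (fun t => (hgpos t).le))
      (HasSubset.Subset.eventuallyLE (Set.Iio_subset_Iio huv))
  set a : ℝ := ν / (cν * ν ^ ((ν + 1) / 2)) with ha
  have hapos : 0 < a := by positivity
  -- key product identity
  have hone : ∀ x : ℝ, x ≠ 0 → |x| ^ ν * |x| ^ (-ν) = 1 := by
    intro x hx
    rw [← Real.rpow_add (abs_pos.2 hx)]
    simp
  have hconst : ∀ x : ℝ, x ≠ 0 →
      a * |x| ^ ν * (cν * ν ^ ((ν + 1) / 2) * (|x| ^ (-ν) / ν)) = 1 := by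
    intro x hx
    have h1 := hone x hx
    have : a * |x| ^ ν * (cν * ν ^ ((ν + 1) / 2) * (|x| ^ (-ν) / ν))
        = (a * (cν * ν ^ ((ν + 1) / 2)) / ν) * (|x| ^ ν * |x| ^ (-ν)) := by ring
    rw [this, h1, ha]
    field_simp
  have hub1 : ∀ x : ℝ, x < 0 → a * |x| ^ ν * F x ≤ 1 := by
    intro x hx
    have h := aux_F_ub ν cν hν hcν hx
    rw [← hF x] at h
    calc a * |x| ^ ν * F x
        ≤ a * |x| ^ ν * (cν * ν ^ ((ν + 1) / 2) * (|x| ^ (-ν) / ν)) :=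
          mul_le_mul_of_nonneg_left h (by positivity)
      _ = 1 := hconst x hx.ne
  have hlb1 : ∀ x : ℝ, x < 0 → (1 + ν / x ^ 2) ^ (-((ν + 1) / 2)) ≤ a * |x| ^ ν * F x := by
    intro x hx
    have h := aux_F_lb ν cν hν hcν hx
    rw [← hF x] at h
    calc (1 + ν / x ^ 2) ^ (-((ν + 1) / 2))
        = (1 + ν / x ^ 2) ^ (-((ν + 1) / 2))
            * (a * |x| ^ ν * (cν * ν ^ ((ν + 1) / 2) * (|x| ^ (-ν) / ν))) := by
          rw [hconst x hx.ne, mul_one]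
      _ = a * |x| ^ ν * ((1 + ν / x ^ 2) ^ (-((ν + 1) / 2))
            * (cν * ν ^ ((ν + 1) / 2) * (|x| ^ (-ν) / ν))) := by ring
      _ ≤ a * |x| ^ ν * F x := mul_le_mul_of_nonneg_left h (by positivity)
  have hlowtendsto : Tendsto (fun x : ℝ => (1 + ν / x ^ 2) ^ (-((ν + 1) / 2))) atBot (nhds 1) := by
    have h2 : Tendsto (fun x : ℝ => x ^ 2) atBot atTop := by
      have h := (tendsto_pow_atTop (n := 2) (by norm_num)).comp
        (tendsto_abs_atBot_atTop (G := ℝ))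
      refine h.congr fun x => ?_
      simp [Function.comp, sq_abs]
    have h3 : Tendsto (fun x : ℝ => ν / x ^ 2) atBot (nhds 0) :=
      Tendsto.div_atTop tendsto_const_nhds h2
    have h4 : Tendsto (fun x : ℝ => 1 + ν / x ^ 2) atBot (nhds 1) := by
      simpa using tendsto_const_nhds.add h3
    have h5 := ((Real.continuousAt_rpow_const 1 (-((ν + 1) / 2))
      (Or.inl one_ne_zero)).tendsto.comp h4)
    simpa [Function.comp_def, Real.one_rpow] using h5
  constructor
  · refine ⟨a, hapos, ?_⟩
    refine tendsto_of_tendsto_of_tendsto_of_le_of_le' hlowtendsto tendsto_const_nhds ?_ ?_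
    · filter_upwards [eventually_lt_atBot (0:ℝ)] with x hx
      exact hlb1 x hx
    · filter_upwards [eventually_lt_atBot (0:ℝ)] with x hx
      exact hub1 x hx
  -- Part 2
  · set C1 : ℝ := cν * ν ^ ((ν + 1) / 2) * (1 + ν) ^ (-((ν + 1) / 2)) / ν with hC1
    have h1ν : (0:ℝ) < 1 + ν := by linarith
    have hC1pos : 0 < C1 := by positivity
    have hlbz : ∀ z : ℝ, z ≤ -1 → C1 * |z| ^ (-ν) ≤ F z := by
      intro z hz
      have hz0 : z < 0 := by linarith
      have h := aux_F_lb ν cν hν hcν hz0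
      rw [← hF z] at h
      have hz2 : (1:ℝ) ≤ z ^ 2 := by nlinarith
      have hcmp : (1 + ν) ^ (-((ν + 1) / 2)) ≤ (1 + ν / z ^ 2) ^ (-((ν + 1) / 2)) := by
        refine Real.rpow_le_rpow_of_nonpos (by positivity) ?_ (by linarith)
        have : ν / z ^ 2 ≤ ν := by
          calc ν / z ^ 2 ≤ ν / 1 := div_le_div_of_nonneg_left hν.le one_pos hz2
            _ = ν := div_one ν
        linarith
      calc C1 * |z| ^ (-ν)
          = (1 + ν) ^ (-((ν + 1) / 2)) * (cν * ν ^ ((ν + 1) / 2) * (|z| ^ (-ν) / ν)) := by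
            rw [hC1]; ring
        _ ≤ (1 + ν / z ^ 2) ^ (-((ν + 1) / 2))
              * (cν * ν ^ ((ν + 1) / 2) * (|z| ^ (-ν) / ν)) :=
            mul_le_mul_of_nonneg_right hcmp (by positivity)
        _ ≤ F z := h
    have hFneg1 : 0 < F (-1) := by
      have h := hlbz (-1) le_rfl
      have : C1 * |(-1:ℝ)| ^ (-ν) = C1 := by norm_num
      rw [this] at h
      exact lt_of_lt_of_le hC1pos h
    have hFpos : ∀ z : ℝ, 0 < F z := by
      intro z
      rcases le_or_gt z (-1) with hz | hz
      · have hz0 : z ≠ 0 := by intro h; rw [h] at hz; norm_num at hz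
        have : 0 < C1 * |z| ^ (-ν) := by
          have := abs_pos.2 hz0
          positivity
        exact lt_of_lt_of_le this (hlbz z hz)
      · exact lt_of_lt_of_le hFneg1 (hFmono hz.le)
    set C2 : ℝ := F (-1) with hC2
    have hinv : ∀ z : ℝ, (F z)⁻¹ ^ m ≤ C1⁻¹ ^ m * |z| ^ (ν * (m:ℝ)) + C2⁻¹ ^ m := by
      intro z
      have hC2m : 0 ≤ C2⁻¹ ^ m := by positivity
      rcases le_or_gt z (-1) with hz | hz
      · have hz0 : z ≠ 0 := by intro h; rw [h] at hz; norm_num at hz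
        have habs : 0 < |z| := abs_pos.2 hz0
        have hL : 0 < C1 * |z| ^ (-ν) := by positivity
        have h1 : (F z)⁻¹ ≤ (C1 * |z| ^ (-ν))⁻¹ := inv_anti₀ hL (hlbz z hz)
        have h2 : (C1 * |z| ^ (-ν))⁻¹ = C1⁻¹ * |z| ^ ν := by
          rw [mul_inv, ← Real.rpow_neg (abs_nonneg z), neg_neg]
        have h3 : (F z)⁻¹ ^ m ≤ (C1⁻¹ * |z| ^ ν) ^ m := by
          refine pow_le_pow_left₀ (inv_nonneg.2 (hFpos z).le) ?_ m
          rw [← h2]; exact h1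
        have h4 : (C1⁻¹ * |z| ^ ν) ^ m = C1⁻¹ ^ m * |z| ^ (ν * (m:ℝ)) := by
          rw [mul_pow]
          congr 1
          rw [← Real.rpow_natCast (|z| ^ ν) m, ← Real.rpow_mul (abs_nonneg z)]
        rw [h4] at h3
        linarith
      · have h1 : (F z)⁻¹ ≤ C2⁻¹ := inv_anti₀ hFneg1 (hFmono hz.le)
        have h3 : (F z)⁻¹ ^ m ≤ C2⁻¹ ^ m :=
          pow_le_pow_left₀ (inv_nonneg.2 (hFpos z).le) h1 m
        have h5 : 0 ≤ C1⁻¹ ^ m * |z| ^ (ν * (m:ℝ)) := by positivity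
        linarith
    -- bound |α (y - δ)|^(νm)
    have hr : (0:ℝ) ≤ ν * (m:ℝ) := by positivity
    have habs2 : ∀ w : ℝ, |α * (w - δ)| ^ (ν * (m:ℝ))
        ≤ α ^ (ν * (m:ℝ)) * 2 ^ (ν * (m:ℝ)) * (|w| ^ (ν * (m:ℝ)) + |δ| ^ (ν * (m:ℝ))) := by
      intro w
      have h1 : |α * (w - δ)| ≤ α * (2 * max |w| |δ|) := by
        rw [abs_mul, abs_of_pos hα]
        refine mul_le_mul_of_nonneg_left ?_ hα.le
        have : |w - δ| ≤ |w| + |δ| := by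
          rw [sub_eq_add_neg]
          exact (abs_add_le _ _).trans_eq (by rw [abs_neg])
        have h2 : |w| + |δ| ≤ 2 * max |w| |δ| := by
          rw [two_mul]
          exact add_le_add (le_max_left _ _) (le_max_right _ _)
        linarith
      have h2 : |α * (w - δ)| ^ (ν * (m:ℝ)) ≤ (α * (2 * max |w| |δ|)) ^ (ν * (m:ℝ)) :=
        Real.rpow_le_rpow (abs_nonneg _) h1 hr
      have h3 : (α * (2 * max |w| |δ|)) ^ (ν * (m:ℝ))
          = α ^ (ν * (m:ℝ)) * 2 ^ (ν * (m:ℝ)) * (max |w| |δ|) ^ (ν * (m:ℝ)) := by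
        rw [Real.mul_rpow hα.le (by positivity), Real.mul_rpow (by norm_num)
          (le_max_of_le_left (abs_nonneg w))]
        ring
      have h4 : (max |w| |δ|) ^ (ν * (m:ℝ)) ≤ |w| ^ (ν * (m:ℝ)) + |δ| ^ (ν * (m:ℝ)) := by
        rcases max_cases |w| |δ| with ⟨hmax, _⟩ | ⟨hmax, _⟩ <;> rw [hmax]
        · have : (0:ℝ) ≤ |δ| ^ (ν * (m:ℝ)) := by positivity
          linarith
        · have : (0:ℝ) ≤ |w| ^ (ν * (m:ℝ)) := by positivity
          linarith
      calc |α * (w - δ)| ^ (ν * (m:ℝ))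
          ≤ α ^ (ν * (m:ℝ)) * 2 ^ (ν * (m:ℝ)) * (max |w| |δ|) ^ (ν * (m:ℝ)) := by
            rw [← h3]; exact h2
        _ ≤ α ^ (ν * (m:ℝ)) * 2 ^ (ν * (m:ℝ)) * (|w| ^ (ν * (m:ℝ)) + |δ| ^ (ν * (m:ℝ))) :=
            mul_le_mul_of_nonneg_left h4 (by positivity)
    set K : ℝ := C1⁻¹ ^ m * (α ^ (ν * (m:ℝ)) * 2 ^ (ν * (m:ℝ))) with hKdef
    have hKpos : 0 ≤ K := by positivity
    refine Integrable.mono'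
      ((hmom.const_mul K).add (integrable_const (K * |δ| ^ (ν * (m:ℝ)) + C2⁻¹ ^ m))) ?_ ?_
    · exact (((hFmono.measurable.inv.pow_const m).comp
        (measurable_const.mul (hy.sub measurable_const)))).aestronglyMeasurable
    · refine Eventually.of_forall (fun ω => ?_)
      have hnn : 0 ≤ (F (α * (y ω - δ)))⁻¹ ^ m := by
        have := (hFpos (α * (y ω - δ))).le
        positivity
      rw [Real.norm_eq_abs, abs_of_nonneg hnn]
      have hA := hinv (α * (y ω - δ))
      have hB := habs2 (y ω)
      have hC : C1⁻¹ ^ m * |α * (y ω - δ)| ^ (ν * (m:ℝ))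
          ≤ K * |y ω| ^ (ν * (m:ℝ)) + K * |δ| ^ (ν * (m:ℝ)) := by
        calc C1⁻¹ ^ m * |α * (y ω - δ)| ^ (ν * (m:ℝ))
            ≤ C1⁻¹ ^ m * (α ^ (ν * (m:ℝ)) * 2 ^ (ν * (m:ℝ))
                * (|y ω| ^ (ν * (m:ℝ)) + |δ| ^ (ν * (m:ℝ)))) :=
              mul_le_mul_of_nonneg_left hB (by positivity)
          _ = K * |y ω| ^ (ν * (m:ℝ)) + K * |δ| ^ (ν * (m:ℝ)) := by rw [hKdef]; ring
      calc (F (α * (y ω - δ)))⁻¹ ^ m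
          ≤ C1⁻¹ ^ m * |α * (y ω - δ)| ^ (ν * (m:ℝ)) + C2⁻¹ ^ m := hA
        _ ≤ K * |y ω| ^ (ν * (m:ℝ)) + (K * |δ| ^ (ν * (m:ℝ)) + C2⁻¹ ^ m) := by linarith
end
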